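/- Let S be a multiset of real numbers with exactly one negative element x and ∑_{s∈S} s = 0. For any permutation π of S with pos_π(x) = k, the objective value decomposes as ∑_{i=1}^n |P_i^π| = ∑_{i=1}^{k−1} π(i)·(k−i) + ∑_{i=1}^{n−k} π(n−i+1)·(n−k−i+1). -/

import Mathlib

/-- If `S` has exactly one negative element and total sum zero, then for
any permutation `π` of `S` whose negative element sits at (1-based) position `k`, the
objective decomposes as
`∑_{i=1}^n |P_i| = ∑_{i=1}^{k-1} π(i)·(k-i) + ∑_{i=1}^{n-k} π(n-i+1)·(n-k-i+1)`
(0-based indexing of `π`). -/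
theorem stmt_9 (n : ℕ) (s π : ℕ → ℝ)
    (hperm : Multiset.map π (Multiset.range n) = Multiset.map s (Multiset.range n))
    (honeneg : ((Finset.range n).filter (fun i => s i < 0)).card = 1)
    (hsum : ∑ i ∈ Finset.range n, s i = 0)
    (k : ℕ) (hk1 : 1 ≤ k) (hk2 : k ≤ n) (hkneg : π (k - 1) < 0) :
    ∑ i ∈ Finset.range n, |∑ j ∈ Finset.range (i + 1), π j| =
      (∑ i ∈ Finset.range (k - 1), π i * ((k : ℝ) - (i + 1))) +
        ∑ i ∈ Finset.range (n - k), π (n - (i + 1)) * ((n : ℝ) - k - i) := by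
  classical
  obtain ⟨m, rfl⟩ : ∃ m, k = m + 1 := ⟨k - 1, by omega⟩
  simp only [Nat.add_sub_cancel] at *
  -- π sums to zero
  have hπsum : ∑ i ∈ Finset.range n, π i = 0 := by
    have h1 : ∑ i ∈ Finset.range n, π i = (Multiset.map π (Multiset.range n)).sum := rfl
    have h2 : ∑ i ∈ Finset.range n, s i = (Multiset.map s (Multiset.range n)).sum := rfl
    rw [h1, hperm, ← h2, hsum]
  -- π has exactly one negative entry
  have hcard : ((Finset.range n).filter (fun i => π i < 0)).card = 1 := by
    have h := congrArg (Multiset.countP (fun x : ℝ => x < 0)) hperm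
    rw [Multiset.countP_map, Multiset.countP_map] at h
    have e1 : ((Finset.range n).filter (fun i => π i < 0)).card
        = Multiset.card (Multiset.filter (fun a => π a < 0) (Multiset.range n)) := rfl
    have e2 : ((Finset.range n).filter (fun i => s i < 0)).card
        = Multiset.card (Multiset.filter (fun a => s a < 0) (Multiset.range n)) := rfl
    rw [e1, h, ← e2, honeneg]
  have hnonneg : ∀ j, j < n → j ≠ m → 0 ≤ π j := by
    intro j hj hjm
    by_contra h
    push_neg at h
    have hm1 : j ∈ (Finset.range n).filter (fun i => π i < 0) := by
      simp [Finset.mem_filter, hj, h]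
    have hm2 : m ∈ (Finset.range n).filter (fun i => π i < 0) := by
      simp only [Finset.mem_filter, Finset.mem_range]
      exact ⟨by omega, hkneg⟩
    have : 1 < ((Finset.range n).filter (fun i => π i < 0)).card :=
      Finset.one_lt_card.mpr ⟨j, hm1, m, hm2, hjm⟩
    omega
  -- split the LHS at m
  rw [← Finset.sum_range_add_sum_Ico _ (show m ≤ n by omega)]
  -- prefix part: absolute values drop
  have hpre : ∑ i ∈ Finset.range m, |∑ j ∈ Finset.range (i + 1), π j|
      = ∑ i ∈ Finset.range m, ∑ j ∈ Finset.range (i + 1), π j := by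
    refine Finset.sum_congr rfl fun i hi => ?_
    rw [Finset.mem_range] at hi
    refine abs_of_nonneg (Finset.sum_nonneg fun j hj => ?_)
    rw [Finset.mem_range] at hj
    exact hnonneg j (by omega) (by omega)
  -- suffix part: prefix partial sums equal minus suffix sums
  have hsuf : ∑ i ∈ Finset.Ico m n, |∑ j ∈ Finset.range (i + 1), π j|
      = ∑ i ∈ Finset.Ico m n, ∑ j ∈ Finset.Ico (i + 1) n, π j := by
    refine Finset.sum_congr rfl fun i hi => ?_
    rw [Finset.mem_Ico] at hi
    have hsplit := Finset.sum_range_add_sum_Ico π (show i + 1 ≤ n by omega)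
    rw [hπsum] at hsplit
    have hnn : 0 ≤ ∑ j ∈ Finset.Ico (i + 1) n, π j :=
      Finset.sum_nonneg fun j hj => by
        rw [Finset.mem_Ico] at hj
        exact hnonneg j (by omega) (by omega)
    have : ∑ j ∈ Finset.range (i + 1), π j = -(∑ j ∈ Finset.Ico (i + 1) n, π j) := by
      linarith
    rw [this, abs_neg, abs_of_nonneg hnn]
  rw [hpre, hsuf]
  -- swap the prefix double sum
  have swap1 : ∑ i ∈ Finset.range m, ∑ j ∈ Finset.range (i + 1), π j
      = ∑ j ∈ Finset.range m, ∑ _i ∈ Finset.Ico j m, π j := by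
    refine Finset.sum_comm' fun i j => ?_
    simp only [Finset.mem_range, Finset.mem_Ico]
    omega
  have swap2 : ∑ i ∈ Finset.Ico m n, ∑ j ∈ Finset.Ico (i + 1) n, π j
      = ∑ j ∈ Finset.Ico (m + 1) n, ∑ _i ∈ Finset.Ico m j, π j := by
    refine Finset.sum_comm' fun i j => ?_
    simp only [Finset.mem_Ico]
    omega
  rw [swap1, swap2]
  congr 1
  · refine Finset.sum_congr rfl fun j hj => ?_
    rw [Finset.mem_range] at hj
    rw [Finset.sum_const, Nat.card_Ico, nsmul_eq_mul]
    have : ((m - j : ℕ) : ℝ) = (m : ℝ) - j := by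
      push_cast [Nat.cast_sub (le_of_lt hj)]; ring
    rw [this]; push_cast; ring
  · refine Finset.sum_nbij' (fun j => n - 1 - j) (fun i => n - 1 - i) ?_ ?_ ?_ ?_ ?_
    · intro a ha; rw [Finset.mem_Ico] at ha; rw [Finset.mem_range]; omega
    · intro a ha; rw [Finset.mem_range] at ha; rw [Finset.mem_Ico]; omega
    · intro a ha; rw [Finset.mem_Ico] at ha; omega
    · intro a ha; rw [Finset.mem_range] at ha; omega
    · intro a ha
      rw [Finset.mem_Ico] at ha
      rw [Finset.sum_const, Nat.card_Ico, nsmul_eq_mul]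
      have h1 : n - (n - 1 - a + 1) = a := by omega
      have h2 : ((a - m : ℕ) : ℝ) = (a : ℝ) - m := by
        push_cast [Nat.cast_sub (show m ≤ a by omega)]; ring
      have h3 : ((n - 1 - a : ℕ) : ℝ) = (n : ℝ) - 1 - a := by
        push_cast [Nat.cast_sub (show a ≤ n - 1 by omega), Nat.cast_sub (show 1 ≤ n by omega)]
        ring
      rw [h1, h2, h3]
      push_cast
      ring
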